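/- If the antipode S is bijective and A is a left symmetric partial H-module algebra, then for all a, b ∈ A and h ∈ H: a(h·b) = h₂·((S⁻¹(h₁)·a)b). -/

import Mathlib

open TensorProduct LinearMap

noncomputable section

variable (k : Type*) [Field k]
variable (H : Type*) [Ring H] [HopfAlgebra k H]
variable (A : Type*) [Ring A] [Algebra k A]

/-- A left partial action of a Hopf algebra `H` on an algebra `A` (Caenepeel–Janssen):
(PA1) `h·(ab) = (h₁·a)(h₂·b)`, (PA2) `1·a = a`, (PA3) `h·(g·a) = (h₁·1)((h₂g)·a)`. -/
structure PartialAction where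
  act : H →ₗ[k] A →ₗ[k] A
  pa1 : ∀ a b : A, act.flip (a * b) =
    LinearMap.mul' k A ∘ₗ TensorProduct.map (act.flip a) (act.flip b) ∘ₗ Coalgebra.comul
  pa2 : ∀ a : A, act 1 a = a
  pa3 : ∀ (g : H) (a : A), act.flip (act g a) =
    LinearMap.mul' k A ∘ₗ
      TensorProduct.map (act.flip 1) ((act.flip a) ∘ₗ LinearMap.mulRight k g) ∘ₗ Coalgebra.comul

variable {k H A}

/-- (PA4): the partial action is symmetric: `h·(g·a) = ((h₁g)·a)(h₂·1)`. -/
def PartialAction.IsSymmetric (α : PartialAction k H A) : Prop :=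
  ∀ (g : H) (a : A), α.act.flip (α.act g a) =
    LinearMap.mul' k A ∘ₗ
      TensorProduct.map ((α.act.flip a) ∘ₗ LinearMap.mulRight k g) (α.act.flip 1) ∘ₗ
        Coalgebra.comul

/-- Left invariants `A^H`. -/
def PartialAction.leftInv (α : PartialAction k H A) : Set A :=
  {a | ∀ h : H, α.act h a = a * α.act h 1}

/-- Right invariants `A^{H,r}`. -/
def PartialAction.rightInv (α : PartialAction k H A) : Set A :=
  {a | ∀ h : H, α.act h a = α.act h 1 * a}

/-- `t` is a left integral in `H`. -/
def IsLeftIntegral (t : H) : Prop := ∀ h : H, h * t = Coalgebra.counit (R := k) h • t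

/-- `t` is a right integral in `H`. -/
def IsRightIntegral (t : H) : Prop := ∀ h : H, t * h = Coalgebra.counit (R := k) h • t

/-- Convolution product on the dual `H* = H →ₗ[k] k`. -/
def conv (f g : H →ₗ[k] k) : H →ₗ[k] k :=
  LinearMap.mul' k k ∘ₗ TensorProduct.map f g ∘ₗ Coalgebra.comul

/-- `T ∈ H*` is a right integral: `T ∗ f = f(1) T`. -/
def IsRightIntegralDual (T : H →ₗ[k] k) : Prop := ∀ f : H →ₗ[k] k, conv T f = f 1 • T

/-- `T ∈ H*` is a left integral: `f ∗ T = f(1) T`. -/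
def IsLeftIntegralDual (T : H →ₗ[k] k) : Prop := ∀ f : H →ₗ[k] k, conv f T = f 1 • T

namespace PartialAction

variable (α : PartialAction k H A)

/-- `ψ (h ⊗ b) = Σ (h₁·b) ⊗ h₂`. -/
def psi : H ⊗[k] A →ₗ[k] A ⊗[k] H :=
  TensorProduct.map (TensorProduct.lift α.act) LinearMap.id
    ∘ₗ (TensorProduct.assoc k H A H).symm.toLinearMap
    ∘ₗ TensorProduct.map LinearMap.id (TensorProduct.comm k H A).toLinearMap
    ∘ₗ (TensorProduct.assoc k H H A).toLinearMap
    ∘ₗ TensorProduct.map Coalgebra.comul LinearMap.id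

/-- The smash product multiplication on `A ⊗ H`:
`(a # h)(b # g) = a(h₁·b) # h₂g`, as a linear map on the tensor square. -/
def smashMul' : (A ⊗[k] H) ⊗[k] (A ⊗[k] H) →ₗ[k] A ⊗[k] H :=
  TensorProduct.map (LinearMap.mul' k A) (LinearMap.mul' k H)
    ∘ₗ (TensorProduct.assoc k A A (H ⊗[k] H)).symm.toLinearMap
    ∘ₗ TensorProduct.map LinearMap.id
        ((TensorProduct.assoc k A H H).toLinearMap
          ∘ₗ TensorProduct.map α.psi LinearMap.id
          ∘ₗ (TensorProduct.assoc k H A H).symm.toLinearMap)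
    ∘ₗ (TensorProduct.assoc k A H (A ⊗[k] H)).toLinearMap

/-- The smash product multiplication, curried. -/
def sm : (A ⊗[k] H) →ₗ[k] (A ⊗[k] H) →ₗ[k] A ⊗[k] H := TensorProduct.curry α.smashMul'

/-- `1 # 1`. -/
def unit : A ⊗[k] H := (1 : A) ⊗ₜ[k] (1 : H)

/-- `j x = x · (1 # 1)`; the element `a #̲ h` of the partial smash product. -/
def j : A ⊗[k] H →ₗ[k] A ⊗[k] H := α.sm.flip (unit)

/-- The partial smash product `A #̲ H`, as a subspace of `A ⊗ H`. -/
def smash : Submodule k (A ⊗[k] H) := LinearMap.range α.j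

/-- The action of `A # H` on `A`: `(a # h) ▸ b = a (h·b)`. -/
def act2 : A ⊗[k] H →ₗ[k] A →ₗ[k] A :=
  TensorProduct.curry (LinearMap.mul' k A
    ∘ₗ TensorProduct.map LinearMap.id (TensorProduct.lift α.act)
    ∘ₗ (TensorProduct.assoc k A H A).toLinearMap)

end PartialAction

/-- `Φ(a # h) = a T(h)`. -/
def PhiMap (T : H →ₗ[k] k) : A ⊗[k] H →ₗ[k] A :=
  (TensorProduct.rid k A).toLinearMap ∘ₗ TensorProduct.map LinearMap.id T

/-- `θ(f) = f(t₁) t₂`. -/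
def thetaMap (t : H) : (H →ₗ[k] k) →ₗ[k] H :=
  (TensorProduct.lid k H).toLinearMap
    ∘ₗ LinearMap.applyₗ (Coalgebra.comul (R := k) t)
    ∘ₗ (TensorProduct.mapBilinear (RingHom.id k) H H k H).flip LinearMap.id


namespace SAFaux
variable {k : Type*} [Field k] {H : Type*} [Ring H] [HopfAlgebra k H]
open Coalgebra HopfAlgebra

lemma repr_counit_smul_left {h : H} (r : Coalgebra.Repr k h (H × H)) :
    ∑ i ∈ r.index, counit (R := k) (r.right i) • r.left i = h :=
  calc ∑ i ∈ r.index, counit (R := k) (r.right i) • r.left i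
      = TensorProduct.rid k H (∑ i ∈ r.index, r.left i ⊗ₜ[k] counit (R := k) (r.right i)) := by
        rw [map_sum]
        exact Finset.sum_congr rfl fun i _ => (TensorProduct.rid_tmul _ _).symm
    _ = TensorProduct.rid k H (h ⊗ₜ[k] 1) := by rw [Coalgebra.sum_tmul_counit_eq]
    _ = h := by simp

lemma repr_counit_smul_right {h : H} (r : Coalgebra.Repr k h (H × H)) :
    ∑ i ∈ r.index, counit (R := k) (r.left i) • r.right i = h :=
  calc ∑ i ∈ r.index, counit (R := k) (r.left i) • r.right i
      = TensorProduct.lid k H (∑ i ∈ r.index, counit (R := k) (r.left i) ⊗ₜ[k] r.right i) := by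
        rw [map_sum]
        exact Finset.sum_congr rfl fun i _ => (TensorProduct.lid_tmul _ _).symm
    _ = TensorProduct.lid k H ((1 : k) ⊗ₜ[k] h) := by rw [Coalgebra.sum_counit_tmul_eq]
    _ = h := by simp

lemma repr_counit_apply_left {M : Type*} [AddCommMonoid M] [Module k M]
    {h : H} (r : Coalgebra.Repr k h (H × H)) (f : H →ₗ[k] M) :
    ∑ i ∈ r.index, counit (R := k) (r.right i) • f (r.left i) = f h := by
  simp_rw [← map_smul]
  rw [← map_sum, repr_counit_smul_left]

lemma repr_counit_apply_right {M : Type*} [AddCommMonoid M] [Module k M]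
    {h : H} (r : Coalgebra.Repr k h (H × H)) (f : H →ₗ[k] M) :
    ∑ i ∈ r.index, counit (R := k) (r.left i) • f (r.right i) = f h := by
  simp_rw [← map_smul]
  rw [← map_sum, repr_counit_smul_right]

/-- Coassociativity for nested Sweedler representations. -/
lemma sweedler3T {z : H} (r : Coalgebra.Repr k z (H × H))
    (s : ∀ i : H × H, Coalgebra.Repr k (r.right i) (H × H))
    (t : ∀ i : H × H, Coalgebra.Repr k (r.left i) (H × H)) :
    ∑ i ∈ r.index, ∑ j ∈ (t i).index,
      (t i).left j ⊗ₜ[k] ((t i).right j ⊗ₜ[k] r.right i)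
    = ∑ i ∈ r.index, ∑ j ∈ (s i).index,
      r.left i ⊗ₜ[k] ((s i).left j ⊗ₜ[k] (s i).right j) := by
  have lhs : ∑ i ∈ r.index, ∑ j ∈ (t i).index,
      (t i).left j ⊗ₜ[k] ((t i).right j ⊗ₜ[k] r.right i)
      = (TensorProduct.assoc k H H H).toLinearMap
          ((Coalgebra.comul (R := k)).rTensor H (Coalgebra.comul (R := k) z)) := by
    rw [← r.eq, map_sum, map_sum]
    refine Finset.sum_congr rfl fun i _ => ?_
    rw [rTensor_tmul, ← (t i).eq, sum_tmul, map_sum]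
    simp
  have rhs : ∑ i ∈ r.index, ∑ j ∈ (s i).index,
      r.left i ⊗ₜ[k] ((s i).left j ⊗ₜ[k] (s i).right j)
      = (Coalgebra.comul (R := k)).lTensor H (Coalgebra.comul (R := k) z) := by
    rw [← r.eq, map_sum]
    refine Finset.sum_congr rfl fun i _ => ?_
    rw [lTensor_tmul, ← (s i).eq, tmul_sum]
  rw [lhs, rhs]
  simpa using Coalgebra.coassoc_apply (R := k) z

lemma antipode_one' : antipode (R := k) (1 : H) = 1 := by
  have h := HopfAlgebra.mul_antipode_rTensor_comul_apply (R := k) (A := H) (a := (1 : H))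
  simpa [Algebra.TensorProduct.one_def] using h


lemma claim2 (x y : H) (rx : Coalgebra.Repr k x (H × H)) (ry : Coalgebra.Repr k y (H × H))
    (sx : ∀ i, Coalgebra.Repr k (rx.right i) (H × H)) (sy : ∀ p, Coalgebra.Repr k (ry.right p) (H × H)) :
    (∑ i ∈ rx.index, ∑ p ∈ ry.index, ∑ j ∈ (sx i).index, ∑ q ∈ (sy p).index,
      antipode (R := k) (rx.left i * ry.left p) * ((sx i).left j * (sy p).left q)
        * (antipode (R := k) ((sy p).right q) * antipode (R := k) ((sx i).right j)))
      = antipode (R := k) (x * y) := by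
  have step1 : ∀ i ∈ rx.index, ∀ p ∈ ry.index, ∀ j ∈ (sx i).index,
      ∑ q ∈ (sy p).index,
        antipode (R := k) (rx.left i * ry.left p) * ((sx i).left j * (sy p).left q)
          * (antipode (R := k) ((sy p).right q) * antipode (R := k) ((sx i).right j))
      = counit (R := k) (ry.right p) •
          (antipode (R := k) (rx.left i * ry.left p)
            * ((sx i).left j * antipode (R := k) ((sx i).right j))) := by
    intro i _ p _ j _
    calc ∑ q ∈ (sy p).index,
          antipode (R := k) (rx.left i * ry.left p) * ((sx i).left j * (sy p).left q)
            * (antipode (R := k) ((sy p).right q) * antipode (R := k) ((sx i).right j))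
        = antipode (R := k) (rx.left i * ry.left p) * ((sx i).left j *
            ((∑ q ∈ (sy p).index, (sy p).left q * antipode (R := k) ((sy p).right q))
              * antipode (R := k) ((sx i).right j))) := by
          rw [Finset.sum_mul, Finset.mul_sum, Finset.mul_sum]
          exact Finset.sum_congr rfl fun q _ => by simp [mul_assoc]
      _ = _ := by
          rw [HopfAlgebra.sum_mul_antipode_eq_smul (sy p)]
          simp [smul_mul_assoc, mul_smul_comm]
  calc (∑ i ∈ rx.index, ∑ p ∈ ry.index, ∑ j ∈ (sx i).index, ∑ q ∈ (sy p).index,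
      antipode (R := k) (rx.left i * ry.left p) * ((sx i).left j * (sy p).left q)
        * (antipode (R := k) ((sy p).right q) * antipode (R := k) ((sx i).right j)))
      = ∑ i ∈ rx.index, ∑ p ∈ ry.index, ∑ j ∈ (sx i).index,
          counit (R := k) (ry.right p) •
            (antipode (R := k) (rx.left i * ry.left p)
              * ((sx i).left j * antipode (R := k) ((sx i).right j))) := by
        refine Finset.sum_congr rfl fun i hi => Finset.sum_congr rfl fun p hp =>
          Finset.sum_congr rfl fun j hj => step1 i hi p hp j hj
    _ = ∑ i ∈ rx.index, ∑ p ∈ ry.index,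
          counit (R := k) (ry.right p) •
            (counit (R := k) (rx.right i) • antipode (R := k) (rx.left i * ry.left p)) := by
        refine Finset.sum_congr rfl fun i _ => Finset.sum_congr rfl fun p _ => ?_
        rw [← Finset.smul_sum, ← Finset.mul_sum, HopfAlgebra.sum_mul_antipode_eq_smul (sx i)]
        simp [mul_smul_comm]
    _ = ∑ i ∈ rx.index, counit (R := k) (rx.right i) • antipode (R := k) (rx.left i * y) := by
        refine Finset.sum_congr rfl fun i _ => ?_
        exact repr_counit_apply_left ry
          (counit (R := k) (rx.right i) •
            (antipode (R := k) ∘ₗ LinearMap.mulLeft k (rx.left i)))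
    _ = antipode (R := k) (x * y) :=
        repr_counit_apply_left rx (antipode (R := k) ∘ₗ LinearMap.mulRight k y)


lemma sum_swap4 {ι₁ ι₂ : Type*} {κ₁ : ι₁ → Type*} {κ₂ : ι₂ → Type*}
    (s₁ : Finset ι₁) (s₂ : Finset ι₂) (u₁ : ∀ i, Finset (κ₁ i)) (u₂ : ∀ p, Finset (κ₂ p))
    {M : Type*} [AddCommMonoid M] (f : (i : ι₁) → κ₁ i → (p : ι₂) → κ₂ p → M) :
    ∑ i ∈ s₁, ∑ p ∈ s₂, ∑ j ∈ u₁ i, ∑ q ∈ u₂ p, f i j p q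
    = ∑ p ∈ s₂, ∑ q ∈ u₂ p, ∑ i ∈ s₁, ∑ j ∈ u₁ i, f i j p q := by
  rw [Finset.sum_comm]
  refine Finset.sum_congr rfl fun p _ => ?_
  calc ∑ i ∈ s₁, ∑ j ∈ u₁ i, ∑ q ∈ u₂ p, f i j p q
      = ∑ i ∈ s₁, ∑ q ∈ u₂ p, ∑ j ∈ u₁ i, f i j p q :=
        Finset.sum_congr rfl fun i _ => Finset.sum_comm
    _ = ∑ q ∈ u₂ p, ∑ i ∈ s₁, ∑ j ∈ u₁ i, f i j p q := Finset.sum_comm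


lemma sum_swap_blocks {ι₁ ι₂ : Type*} {κ₁ : ι₁ → Type*} {κ₂ : ι₂ → Type*}
    (s₁ : Finset ι₁) (s₂ : Finset ι₂) (u₁ : ∀ i, Finset (κ₁ i)) (u₂ : ∀ p, Finset (κ₂ p))
    {M : Type*} [AddCommMonoid M] (f : (i : ι₁) → κ₁ i → (p : ι₂) → κ₂ p → M) :
    ∑ p ∈ s₂, ∑ q ∈ u₂ p, ∑ i ∈ s₁, ∑ j ∈ u₁ i, f i j p q
    = ∑ i ∈ s₁, ∑ j ∈ u₁ i, ∑ p ∈ s₂, ∑ q ∈ u₂ p, f i j p q := by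
  calc ∑ p ∈ s₂, ∑ q ∈ u₂ p, ∑ i ∈ s₁, ∑ j ∈ u₁ i, f i j p q
      = ∑ p ∈ s₂, ∑ i ∈ s₁, ∑ q ∈ u₂ p, ∑ j ∈ u₁ i, f i j p q :=
        Finset.sum_congr rfl fun p _ => Finset.sum_comm
    _ = ∑ i ∈ s₁, ∑ p ∈ s₂, ∑ q ∈ u₂ p, ∑ j ∈ u₁ i, f i j p q := Finset.sum_comm
    _ = ∑ i ∈ s₁, ∑ p ∈ s₂, ∑ j ∈ u₁ i, ∑ q ∈ u₂ p, f i j p q :=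
        Finset.sum_congr rfl fun i _ => Finset.sum_congr rfl fun p _ => Finset.sum_comm
    _ = ∑ i ∈ s₁, ∑ j ∈ u₁ i, ∑ p ∈ s₂, ∑ q ∈ u₂ p, f i j p q :=
        Finset.sum_congr rfl fun i _ => Finset.sum_comm


lemma claim1 (x y : H) (rx : Coalgebra.Repr k x (H × H)) (ry : Coalgebra.Repr k y (H × H))
    (sx : ∀ i, Coalgebra.Repr k (rx.right i) (H × H)) (sy : ∀ p, Coalgebra.Repr k (ry.right p) (H × H))
    (tx : ∀ i, Coalgebra.Repr k (rx.left i) (H × H)) (ty : ∀ p, Coalgebra.Repr k (ry.left p) (H × H)) :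
    (∑ i ∈ rx.index, ∑ p ∈ ry.index, ∑ j ∈ (sx i).index, ∑ q ∈ (sy p).index,
      (antipode (R := k) (rx.left i * ry.left p) * ((sx i).left j * (sy p).left q))
        ⊗ₜ[k] ((sy p).right q ⊗ₜ[k] (sx i).right j))
      = (1 : H) ⊗ₜ[k] (y ⊗ₜ[k] x) := by
  classical
  -- maps used to transport the nested-representation identities
  set S : H →ₗ[k] H := antipode (R := k) with hSdef
  have Phi : ∀ a b c : H, ∃ F : H ⊗[k] (H ⊗[k] H) →ₗ[k] H ⊗[k] (H ⊗[k] H),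
      ∀ u v w : H, F (u ⊗ₜ (v ⊗ₜ w)) = (S (u * a) * (v * b)) ⊗ₜ (c ⊗ₜ w) := by
    intro a b c
    refine ⟨TensorProduct.map
      (LinearMap.mul' k H ∘ₗ TensorProduct.map (S ∘ₗ LinearMap.mulRight k a)
        (LinearMap.mulRight k b)) (TensorProduct.mk k H H c)
      ∘ₗ (TensorProduct.assoc k H H H).symm.toLinearMap, fun u v w => ?_⟩
    simp
  have Psi : ∀ d e f : H, ∃ F : H ⊗[k] (H ⊗[k] H) →ₗ[k] H ⊗[k] (H ⊗[k] H),
      ∀ u v w : H, F (u ⊗ₜ (v ⊗ₜ w)) = (S (d * u) * (e * v)) ⊗ₜ (w ⊗ₜ f) := by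
    intro d e f
    refine ⟨TensorProduct.map
      (LinearMap.mul' k H ∘ₗ TensorProduct.map (S ∘ₗ LinearMap.mulLeft k d)
        (LinearMap.mulLeft k e)) ((TensorProduct.mk k H H).flip f)
      ∘ₗ (TensorProduct.assoc k H H H).symm.toLinearMap, fun u v w => ?_⟩
    simp
  calc (∑ i ∈ rx.index, ∑ p ∈ ry.index, ∑ j ∈ (sx i).index, ∑ q ∈ (sy p).index,
      (S (rx.left i * ry.left p) * ((sx i).left j * (sy p).left q))
        ⊗ₜ[k] ((sy p).right q ⊗ₜ[k] (sx i).right j))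
      = ∑ p ∈ ry.index, ∑ q ∈ (sy p).index, ∑ i ∈ rx.index, ∑ j ∈ (sx i).index,
        (S (rx.left i * ry.left p) * ((sx i).left j * (sy p).left q))
          ⊗ₜ[k] ((sy p).right q ⊗ₜ[k] (sx i).right j) := by
        exact sum_swap4 _ _ _ _ _
    _ = ∑ p ∈ ry.index, ∑ q ∈ (sy p).index, ∑ i ∈ rx.index, ∑ j ∈ (tx i).index,
        (S ((tx i).left j * ry.left p) * ((tx i).right j * (sy p).left q))
          ⊗ₜ[k] ((sy p).right q ⊗ₜ[k] rx.right i) := by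
        refine Finset.sum_congr rfl fun p _ => Finset.sum_congr rfl fun q _ => ?_
        obtain ⟨F, hF⟩ := Phi (ry.left p) ((sy p).left q) ((sy p).right q)
        have := congrArg F (sweedler3T rx sx tx)
        simp only [map_sum, hF] at this
        exact this.symm
    _ = ∑ i ∈ rx.index, ∑ j ∈ (tx i).index, ∑ p ∈ ry.index, ∑ q ∈ (sy p).index,
        (S ((tx i).left j * ry.left p) * ((tx i).right j * (sy p).left q))
          ⊗ₜ[k] ((sy p).right q ⊗ₜ[k] rx.right i) := by
        exact sum_swap_blocks rx.index ry.index (fun i => (tx i).index)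
          (fun p => (sy p).index) _
    _ = ∑ i ∈ rx.index, ∑ j ∈ (tx i).index, ∑ p ∈ ry.index, ∑ q ∈ (ty p).index,
        (S ((tx i).left j * (ty p).left q) * ((tx i).right j * (ty p).right q))
          ⊗ₜ[k] (ry.right p ⊗ₜ[k] rx.right i) := by
        refine Finset.sum_congr rfl fun i _ => Finset.sum_congr rfl fun j _ => ?_
        obtain ⟨F, hF⟩ := Psi ((tx i).left j) ((tx i).right j) (rx.right i)
        have := congrArg F (sweedler3T ry sy ty)
        simp only [map_sum, hF] at this
        exact this.symm
    _ = ∑ i ∈ rx.index, ∑ p ∈ ry.index, ∑ j ∈ (tx i).index, ∑ q ∈ (ty p).index,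
        (S ((tx i).left j * (ty p).left q) * ((tx i).right j * (ty p).right q))
          ⊗ₜ[k] (ry.right p ⊗ₜ[k] rx.right i) := by
        exact Finset.sum_congr rfl fun i _ => Finset.sum_comm
    _ = ∑ i ∈ rx.index, ∑ p ∈ ry.index,
          (counit (R := k) (rx.left i) * counit (R := k) (ry.left p)) •
            ((1 : H) ⊗ₜ[k] (ry.right p ⊗ₜ[k] rx.right i)) := by
        refine Finset.sum_congr rfl fun i _ => Finset.sum_congr rfl fun p _ => ?_
        have hcm : (∑ j ∈ (tx i).index, ∑ q ∈ (ty p).index,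
            ((tx i).left j * (ty p).left q) ⊗ₜ[k] ((tx i).right j * (ty p).right q))
            = Coalgebra.comul (R := k) (rx.left i * ry.left p) := by
          rw [Bialgebra.comul_mul, ← (tx i).eq, ← (ty p).eq, Finset.sum_mul_sum]
          simp [Algebra.TensorProduct.tmul_mul_tmul]
        have hmap := congrArg (LinearMap.mul' k H ∘ₗ S.rTensor H) hcm
        simp only [map_sum, LinearMap.comp_apply, rTensor_tmul, LinearMap.mul'_apply] at hmap
        rw [hSdef] at hmap
        rw [HopfAlgebra.mul_antipode_rTensor_comul_apply] at hmap
        calc ∑ j ∈ (tx i).index, ∑ q ∈ (ty p).index,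
            (S ((tx i).left j * (ty p).left q) * ((tx i).right j * (ty p).right q))
              ⊗ₜ[k] (ry.right p ⊗ₜ[k] rx.right i)
            = (∑ j ∈ (tx i).index, ∑ q ∈ (ty p).index,
                S ((tx i).left j * (ty p).left q) * ((tx i).right j * (ty p).right q))
              ⊗ₜ[k] (ry.right p ⊗ₜ[k] rx.right i) := by
              rw [sum_tmul]
              exact Finset.sum_congr rfl fun j _ => by rw [sum_tmul]
          _ = _ := by
              rw [hSdef, hmap, Bialgebra.counit_mul, Algebra.algebraMap_eq_smul_one, smul_tmul']
    _ = ∑ i ∈ rx.index, counit (R := k) (rx.left i) • ((1 : H) ⊗ₜ[k] (y ⊗ₜ[k] rx.right i)) := by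
        refine Finset.sum_congr rfl fun i _ => ?_
        simp_rw [mul_smul]
        rw [← Finset.smul_sum]
        congr 1
        exact repr_counit_apply_right ry
          (TensorProduct.mk k H (H ⊗[k] H) 1 ∘ₗ (TensorProduct.mk k H H).flip (rx.right i))
    _ = (1 : H) ⊗ₜ[k] (y ⊗ₜ[k] x) :=
        repr_counit_apply_right rx
          (TensorProduct.mk k H (H ⊗[k] H) 1 ∘ₗ TensorProduct.mk k H H y)


lemma antipode_mul' (x y : H) :
    antipode (R := k) (x * y) = antipode (R := k) y * antipode (R := k) x := by
  classical
  set rx := Coalgebra.Repr.arbitrary k x with hrx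
  set ry := Coalgebra.Repr.arbitrary k y with hry
  set sx : ∀ i, Coalgebra.Repr k (rx.right i) (H × H) := fun i => Coalgebra.Repr.arbitrary k _ with hsx
  set sy : ∀ p, Coalgebra.Repr k (ry.right p) (H × H) := fun p => Coalgebra.Repr.arbitrary k _ with hsy
  set tx : ∀ i, Coalgebra.Repr k (rx.left i) (H × H) := fun i => Coalgebra.Repr.arbitrary k _ with htx
  set ty : ∀ p, Coalgebra.Repr k (ry.left p) (H × H) := fun p => Coalgebra.Repr.arbitrary k _ with hty
  set N : H ⊗[k] (H ⊗[k] H) →ₗ[k] H :=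
    LinearMap.mul' k H ∘ₗ
      (LinearMap.mul' k H ∘ₗ
        TensorProduct.map (antipode (R := k)) (antipode (R := k))).lTensor H with hN
  have hNt : ∀ w u v : H, N (w ⊗ₜ[k] (u ⊗ₜ[k] v))
      = w * (antipode (R := k) u * antipode (R := k) v) := by
    intro w u v; simp [hN]
  calc antipode (R := k) (x * y)
      = ∑ i ∈ rx.index, ∑ p ∈ ry.index, ∑ j ∈ (sx i).index, ∑ q ∈ (sy p).index,
          antipode (R := k) (rx.left i * ry.left p) * ((sx i).left j * (sy p).left q)
            * (antipode (R := k) ((sy p).right q) * antipode (R := k) ((sx i).right j)) :=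
        (claim2 x y rx ry sx sy).symm
    _ = N (∑ i ∈ rx.index, ∑ p ∈ ry.index, ∑ j ∈ (sx i).index, ∑ q ∈ (sy p).index,
          (antipode (R := k) (rx.left i * ry.left p) * ((sx i).left j * (sy p).left q))
            ⊗ₜ[k] ((sy p).right q ⊗ₜ[k] (sx i).right j)) := by
        rw [map_sum]
        refine Finset.sum_congr rfl fun i _ => ?_
        rw [map_sum]
        refine Finset.sum_congr rfl fun p _ => ?_
        rw [map_sum]
        refine Finset.sum_congr rfl fun j _ => ?_
        rw [map_sum]
        refine Finset.sum_congr rfl fun q _ => ?_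
        rw [hNt, mul_assoc]
    _ = N ((1 : H) ⊗ₜ[k] (y ⊗ₜ[k] x)) := by rw [claim1 x y rx ry sx sy tx ty]
    _ = antipode (R := k) y * antipode (R := k) x := by rw [hNt, one_mul]


variable (Sinv : H →ₗ[k] H)

lemma Sinv_one (hS1 : ∀ x : H, Sinv (antipode (R := k) x) = x) : Sinv 1 = 1 := by
  conv_lhs => rw [← antipode_one' (k := k) (H := H)]
  exact hS1 1

lemma Sinv_mul (hS1 : ∀ x : H, Sinv (antipode (R := k) x) = x)
    (hS2 : ∀ x : H, antipode (R := k) (Sinv x) = x) (x y : H) :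
    Sinv (x * y) = Sinv y * Sinv x := by
  have h : x * y = antipode (R := k) (Sinv y * Sinv x) := by
    rw [antipode_mul', hS2, hS2]
  rw [h, hS1]

lemma nu_lemma (hS1 : ∀ x : H, Sinv (antipode (R := k) x) = x)
    (hS2 : ∀ x : H, antipode (R := k) (Sinv x) = x) {h : H} (r : Coalgebra.Repr k h (H × H)) :
    ∑ i ∈ r.index, r.right i * Sinv (r.left i) = counit (R := k) h • (1 : H) := by
  have base := HopfAlgebra.sum_mul_antipode_eq_smul (R := k) r
  have e := congrArg Sinv base
  rw [map_sum, map_smul, Sinv_one Sinv hS1] at e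
  rw [← e]
  refine Finset.sum_congr rfl fun i _ => ?_
  rw [Sinv_mul Sinv hS1 hS2, hS1]

/-- The key collapse identity `Σ (h₂ S⁻¹(h₁)) ⊗ h₃ ⊗ h₄ = 1 ⊗ Δh`. -/
lemma C1_lemma (hS1 : ∀ x : H, Sinv (antipode (R := k) x) = x)
    (hS2 : ∀ x : H, antipode (R := k) (Sinv x) = x)
    {h : H} (r : Coalgebra.Repr k h (H × H)) (s : ∀ i, Coalgebra.Repr k (r.right i) (H × H))
    (w : ∀ i j, Coalgebra.Repr k ((s i).left j) (H × H)) :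
    ∑ i ∈ r.index, ∑ j ∈ (s i).index, ∑ l ∈ (w i j).index,
      ((w i j).left l * Sinv (r.left i)) ⊗ₜ[k] ((w i j).right l ⊗ₜ[k] (s i).right j)
    = (1 : H) ⊗ₜ[k] Coalgebra.comul (R := k) h := by
  classical
  set z : ∀ i j, Coalgebra.Repr k ((s i).right j) (H × H) :=
    fun i j => Coalgebra.Repr.arbitrary k _ with hz
  set t : ∀ i, Coalgebra.Repr k (r.left i) (H × H) := fun i => Coalgebra.Repr.arbitrary k _ with ht
  have Xi : ∃ F : H ⊗[k] (H ⊗[k] H) →ₗ[k] H ⊗[k] (H ⊗[k] H),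
      ∀ u v x : H, F (x ⊗ₜ (u ⊗ₜ v)) = (u * Sinv x) ⊗ₜ Coalgebra.comul (R := k) v := by
    refine ⟨TensorProduct.map
      (LinearMap.mul' k H ∘ₗ (TensorProduct.comm k H H).toLinearMap ∘ₗ Sinv.rTensor H)
      (Coalgebra.comul (R := k)) ∘ₗ (TensorProduct.assoc k H H H).symm.toLinearMap,
      fun u v x => ?_⟩
    simp
  obtain ⟨F, hF⟩ := Xi
  calc ∑ i ∈ r.index, ∑ j ∈ (s i).index, ∑ l ∈ (w i j).index,
      ((w i j).left l * Sinv (r.left i)) ⊗ₜ[k] ((w i j).right l ⊗ₜ[k] (s i).right j)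
      = ∑ i ∈ r.index, ∑ j ∈ (s i).index, ∑ l ∈ (z i j).index,
        ((s i).left j * Sinv (r.left i)) ⊗ₜ[k] ((z i j).left l ⊗ₜ[k] (z i j).right l) := by
        refine Finset.sum_congr rfl fun i _ => ?_
        have key := congrArg (TensorProduct.map (LinearMap.mulRight k (Sinv (r.left i)))
          (LinearMap.id (M := H ⊗[k] H))) (sweedler3T (s i) (z i) (w i))
        simpa only [map_sum, TensorProduct.map_tmul, LinearMap.mulRight_apply,
          LinearMap.id_coe, id_eq] using key
    _ = ∑ i ∈ r.index, ∑ j ∈ (s i).index,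
        F (r.left i ⊗ₜ[k] ((s i).left j ⊗ₜ[k] (s i).right j)) := by
        refine Finset.sum_congr rfl fun i _ => Finset.sum_congr rfl fun j _ => ?_
        rw [hF, ← (z i j).eq, tmul_sum]
    _ = ∑ i ∈ r.index, ∑ j ∈ (t i).index,
        F ((t i).left j ⊗ₜ[k] ((t i).right j ⊗ₜ[k] r.right i)) := by
        have := congrArg F (sweedler3T r s t)
        simp only [map_sum] at this
        exact this.symm
    _ = ∑ i ∈ r.index, ∑ j ∈ (t i).index,
        ((t i).right j * Sinv ((t i).left j)) ⊗ₜ[k] Coalgebra.comul (R := k) (r.right i) := by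
        refine Finset.sum_congr rfl fun i _ => Finset.sum_congr rfl fun j _ => hF _ _ _
    _ = ∑ i ∈ r.index, counit (R := k) (r.left i) •
        ((1 : H) ⊗ₜ[k] Coalgebra.comul (R := k) (r.right i)) := by
        refine Finset.sum_congr rfl fun i _ => ?_
        rw [← sum_tmul, nu_lemma Sinv hS1 hS2 (t i), smul_tmul']
    _ = (1 : H) ⊗ₜ[k] Coalgebra.comul (R := k) h :=
        repr_counit_apply_right r
          (TensorProduct.mk k H (H ⊗[k] H) 1 ∘ₗ Coalgebra.comul (R := k))


variable {A : Type*} [Ring A] [Algebra k A] (α : PartialAction k H A)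

lemma pa1' (g : H) (u v : A) (rep : Coalgebra.Repr k g (H × H)) :
    α.act g (u * v) = ∑ j ∈ rep.index, α.act (rep.left j) u * α.act (rep.right j) v := by
  have e := LinearMap.congr_fun (α.pa1 u v) g
  rw [LinearMap.flip_apply] at e
  rw [e, LinearMap.comp_apply, LinearMap.comp_apply, ← rep.eq, map_sum, map_sum]
  exact Finset.sum_congr rfl fun j _ => by simp

lemma pa4' (hsym : α.IsSymmetric) (g m : H) (c : A) (rep : Coalgebra.Repr k g (H × H)) :
    α.act g (α.act m c)
      = ∑ l ∈ rep.index, α.act (rep.left l * m) c * α.act (rep.right l) 1 := by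
  have e := LinearMap.congr_fun (hsym m c) g
  rw [LinearMap.flip_apply] at e
  rw [e, LinearMap.comp_apply, LinearMap.comp_apply, ← rep.eq, map_sum, map_sum]
  exact Finset.sum_congr rfl fun l _ => by simp

lemma pa3b (h : H) (b : A) (r : Coalgebra.Repr k h (H × H)) :
    α.act h b = ∑ i ∈ r.index, α.act (r.left i) 1 * α.act (r.right i) b := by
  have e := LinearMap.congr_fun (α.pa3 1 b) h
  rw [LinearMap.flip_apply, α.pa2] at e
  rw [e, LinearMap.comp_apply, LinearMap.comp_apply, ← r.eq, map_sum, map_sum]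
  exact Finset.sum_congr rfl fun i _ => by simp


end SAFaux

open SAFaux in
/-- for a symmetric partial action with bijective antipode,
`a (h·b) = Σ h₂ · ((S⁻¹(h₁)·a) b)`. -/
theorem symmetric_action_formula
    {k : Type*} [Field k] {H : Type*} [Ring H] [HopfAlgebra k H]
    {A : Type*} [Ring A] [Algebra k A] (α : PartialAction k H A)
    (hsym : α.IsSymmetric) (Sinv : H →ₗ[k] H)
    (hS1 : ∀ x : H, Sinv (HopfAlgebra.antipode (R := k) x) = x)
    (hS2 : ∀ x : H, HopfAlgebra.antipode (R := k) (Sinv x) = x)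
    (a b : A) (h : H) :
    a * α.act h b =
      TensorProduct.lift α.act
        ((TensorProduct.comm k A H)
          ((TensorProduct.map
              ((LinearMap.mulRight k b) ∘ₗ (α.act.flip a) ∘ₗ Sinv) LinearMap.id)
            (Coalgebra.comul (R := k) h))) := by
  classical
  set r := Coalgebra.Repr.arbitrary k h with hr
  set s : ∀ i, Coalgebra.Repr k (r.right i) (H × H) := fun i => Coalgebra.Repr.arbitrary k _ with hs
  set w : ∀ i j, Coalgebra.Repr k ((s i).left j) (H × H) :=
    fun i j => Coalgebra.Repr.arbitrary k _ with hw
  -- rewrite the right-hand side as a Sweedler sum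
  rw [← r.eq, map_sum, map_sum, map_sum]
  have rhs_eq : ∀ i, TensorProduct.lift α.act
      ((TensorProduct.comm k A H)
        ((TensorProduct.map ((LinearMap.mulRight k b) ∘ₗ (α.act.flip a) ∘ₗ Sinv)
          LinearMap.id) (r.left i ⊗ₜ[k] r.right i)))
      = α.act (r.right i) (α.act (Sinv (r.left i)) a * b) := by
    intro i
    simp
  rw [Finset.sum_congr rfl fun i _ => rhs_eq i]
  -- the action-side multiplication map
  set G3 : H ⊗[k] (H ⊗[k] H) →ₗ[k] A :=
    LinearMap.mul' k A ∘ₗ TensorProduct.map (α.act.flip a)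
      (LinearMap.mul' k A ∘ₗ TensorProduct.map (α.act.flip 1) (α.act.flip b)) with hG3
  have hG3t : ∀ u v x : H, G3 (x ⊗ₜ[k] (u ⊗ₜ[k] v))
      = α.act x a * (α.act u 1 * α.act v b) := by
    intro u v x; simp [hG3]
  calc a * α.act h b
      = a * ∑ i ∈ r.index, α.act (r.left i) 1 * α.act (r.right i) b := by
        rw [← pa3b α h b r]
    _ = ∑ i ∈ r.index, α.act 1 a * (α.act (r.left i) 1 * α.act (r.right i) b) := by
        rw [Finset.mul_sum]
        exact Finset.sum_congr rfl fun i _ => by rw [α.pa2]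
    _ = G3 ((1 : H) ⊗ₜ[k] Coalgebra.comul (R := k) h) := by
        rw [← r.eq, tmul_sum, map_sum]
        exact Finset.sum_congr rfl fun i _ => (hG3t _ _ _).symm
    _ = G3 (∑ i ∈ r.index, ∑ j ∈ (s i).index, ∑ l ∈ (w i j).index,
        ((w i j).left l * Sinv (r.left i)) ⊗ₜ[k] ((w i j).right l ⊗ₜ[k] (s i).right j)) := by
        rw [C1_lemma Sinv hS1 hS2 r s w]
    _ = ∑ i ∈ r.index, ∑ j ∈ (s i).index, ∑ l ∈ (w i j).index,
        α.act ((w i j).left l * Sinv (r.left i)) a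
          * (α.act ((w i j).right l) 1 * α.act ((s i).right j) b) := by
        rw [map_sum]
        refine Finset.sum_congr rfl fun i _ => ?_
        rw [map_sum]
        refine Finset.sum_congr rfl fun j _ => ?_
        rw [map_sum]
        exact Finset.sum_congr rfl fun l _ => hG3t _ _ _
    _ = ∑ i ∈ r.index, α.act (r.right i) (α.act (Sinv (r.left i)) a * b) := by
        refine Finset.sum_congr rfl fun i _ => ?_
        rw [pa1' α (r.right i) (α.act (Sinv (r.left i)) a) b (s i)]
        refine Finset.sum_congr rfl fun j _ => ?_
        rw [pa4' α hsym ((s i).left j) (Sinv (r.left i)) a (w i j), Finset.sum_mul]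
        exact Finset.sum_congr rfl fun l _ => by rw [mul_assoc]

end
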